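/- Let q ∈ (0,1), R ≥ 1 an integer, and p = (1-2q+q^(R+1))/(1-2q+q^R) with p ∈ (0,1). With S_0 the random variable with P(S_0 = k) = q^k(1-q) for 0 ≤ k ≤ R-1 and P(S_0 = k) = q^R p^(k-R)(1-p) for k ≥ R, one has E(S_0²) = [2 - 8q + 8q² + (2R+1)q^R + (2-6R)q^(R+1) + (4R-5)q^(R+2)] / (q^R (1-q)²). -/

import Mathlib

set_option maxHeartbeats 1000000

lemma tsum_sq_geometric {x : ℝ} (h0 : 0 ≤ x) (h1 : x < 1) :
    ∑' n : ℕ, (n:ℝ)^2 * x^n = x*(1+x)/(1-x)^3 := by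
  have hx : ‖x‖ < 1 := by rw [Real.norm_eq_abs, abs_of_nonneg h0]; exact h1
  have S2 : Summable (fun n : ℕ => (n:ℝ)^2 * x^n) :=
    summable_pow_mul_geometric_of_norm_lt_one 2 hx
  have S1 : Summable (fun n : ℕ => (n:ℝ) * x^n) := by
    simpa using summable_pow_mul_geometric_of_norm_lt_one 1 hx
  have S0 : Summable (fun n : ℕ => x^n) := summable_geometric_of_lt_one h0 h1
  have hne : (1 - x) ≠ 0 := by nlinarith
  have key : (∑' n : ℕ, (n:ℝ)^2 * x^n)
      = x * (∑' n : ℕ, (n:ℝ)^2 * x^n) + 2*x*(x/(1-x)^2) + x*(1/(1-x)) := by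
    have h := Summable.tsum_eq_zero_add S2
    conv_lhs => rw [h]
    have heq : ∀ n : ℕ, ((n+1 : ℕ):ℝ)^2 * x^(n+1)
        = x * ((n:ℝ)^2 * x^n) + 2*x*((n:ℝ)*x^n) + x*(x^n) := by
      intro n; push_cast; ring
    calc ((0:ℕ):ℝ)^2 * x^0 + ∑' n : ℕ, ((n+1 : ℕ):ℝ)^2 * x^(n+1)
        = ∑' n : ℕ, (x * ((n:ℝ)^2 * x^n) + 2*x*((n:ℝ)*x^n) + x*(x^n)) := by
          simp only [heq]; simp
      _ = x * (∑' n : ℕ, (n:ℝ)^2 * x^n) + 2*x*(x/(1-x)^2) + x*(1/(1-x)) := by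
          rw [Summable.tsum_add ((S2.mul_left x).add ((S1.mul_left (2*x)))) (S0.mul_left x),
            Summable.tsum_add (S2.mul_left x) (S1.mul_left (2*x)),
            tsum_mul_left, tsum_mul_left, tsum_mul_left,
            tsum_coe_mul_geometric_of_norm_lt_one hx,
            tsum_geometric_of_lt_one h0 h1, inv_eq_one_div]
  have : (1 - x) * (∑' n : ℕ, (n:ℝ)^2 * x^n) = 2*x*(x/(1-x)^2) + x*(1/(1-x)) := by
    linarith [key]
  field_simp at this ⊢
  nlinarith [this]

lemma summable_shift_sq {x : ℝ} (h0 : 0 ≤ x) (h1 : x < 1) (c : ℝ) :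
    Summable (fun n : ℕ => ((n:ℝ)+c)^2 * x^n) := by
  have hx : ‖x‖ < 1 := by rw [Real.norm_eq_abs, abs_of_nonneg h0]; exact h1
  have S2 : Summable (fun n : ℕ => (n:ℝ)^2 * x^n) :=
    summable_pow_mul_geometric_of_norm_lt_one 2 hx
  have S1 : Summable (fun n : ℕ => (n:ℝ) * x^n) := by
    simpa using summable_pow_mul_geometric_of_norm_lt_one 1 hx
  have S0 : Summable (fun n : ℕ => x^n) := summable_geometric_of_lt_one h0 h1
  have := (S2.add (S1.mul_left (2*c))).add (S0.mul_left (c^2))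
  refine this.congr fun n => ?_
  show (n:ℝ)^2 * x^n + 2*c*((n:ℝ)*x^n) + c^2*(x^n) = ((n:ℝ)+c)^2 * x^n
  ring

lemma tsum_shift_sq {x : ℝ} (h0 : 0 ≤ x) (h1 : x < 1) (c : ℝ) :
    ∑' n : ℕ, ((n:ℝ)+c)^2 * x^n
      = c^2/(1-x) + 2*c*(x/(1-x)^2) + x*(1+x)/(1-x)^3 := by
  have hx : ‖x‖ < 1 := by rw [Real.norm_eq_abs, abs_of_nonneg h0]; exact h1
  have S2 : Summable (fun n : ℕ => (n:ℝ)^2 * x^n) :=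
    summable_pow_mul_geometric_of_norm_lt_one 2 hx
  have S1 : Summable (fun n : ℕ => (n:ℝ) * x^n) := by
    simpa using summable_pow_mul_geometric_of_norm_lt_one 1 hx
  have S0 : Summable (fun n : ℕ => x^n) := summable_geometric_of_lt_one h0 h1
  have heq : ∀ n : ℕ, ((n:ℝ)+c)^2 * x^n
      = ((n:ℝ)^2 * x^n + 2*c*((n:ℝ)*x^n)) + c^2*(x^n) := fun n => by ring
  calc ∑' n : ℕ, ((n:ℝ)+c)^2 * x^n
      = ∑' n : ℕ, (((n:ℝ)^2 * x^n + 2*c*((n:ℝ)*x^n)) + c^2*(x^n)) := by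
        simp only [heq]
    _ = c^2/(1-x) + 2*c*(x/(1-x)^2) + x*(1+x)/(1-x)^3 := by
        rw [Summable.tsum_add (S2.add (S1.mul_left (2*c))) (S0.mul_left (c^2)),
          Summable.tsum_add S2 (S1.mul_left (2*c)), tsum_mul_left, tsum_mul_left,
          tsum_coe_mul_geometric_of_norm_lt_one hx,
          tsum_geometric_of_lt_one h0 h1, tsum_sq_geometric h0 h1]
        rw [inv_eq_one_div]; ring

theorem stmt11 (q : ℝ) (R : ℕ) (hq : q ∈ Set.Ioo (0:ℝ) 1) (hR : 1 ≤ R)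
    (hden : 1 - 2*q + q^R ≠ 0)
    (hp : (1 - 2*q + q^(R+1)) / (1 - 2*q + q^R) ∈ Set.Ioo (0:ℝ) 1) :
    ∑' k : ℕ, (k : ℝ)^2 *
        (if k < R then q^k * (1-q)
         else q^R * ((1 - 2*q + q^(R+1)) / (1 - 2*q + q^R))^(k-R) *
           (1 - (1 - 2*q + q^(R+1)) / (1 - 2*q + q^R)))
    = (2 - 8*q + 8*q^2 + (2*(R:ℝ)+1)*q^R + (2-6*(R:ℝ))*q^(R+1)
        + (4*(R:ℝ)-5)*q^(R+2)) / (q^R * (1-q)^2) := by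
  obtain ⟨hq0, hq1⟩ := hq
  obtain ⟨hp0, hp1⟩ := hp
  set p : ℝ := (1 - 2*q + q^(R+1)) / (1 - 2*q + q^R) with hpdef
  set f : ℕ → ℝ := fun k => (k : ℝ)^2 *
      (if k < R then q^k * (1-q) else q^R * p^(k-R) * (1 - p)) with hfdef
  have hq0' : (0:ℝ) ≤ q := le_of_lt hq0
  have hp0' : (0:ℝ) ≤ p := le_of_lt hp0
  have hshift : ∀ n : ℕ, f (n + R) = ((n:ℝ) + (R:ℝ))^2 * p^n * (q^R * (1-p)) := by
    intro n
    have h1 : ¬ (n + R < R) := by omega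
    have h2 : n + R - R = n := by omega
    simp only [hfdef, h1, if_false, h2]
    push_cast; ring
  have hSshift : Summable (fun n : ℕ => f (n + R)) := by
    have := (summable_shift_sq hp0' hp1 (R:ℝ)).mul_right (q^R * (1-p))
    refine this.congr fun n => ?_
    rw [hshift n]
  have hSf : Summable f := (summable_nat_add_iff R).mp hSshift
  have hsplit := (Summable.sum_add_tsum_nat_add R hSf).symm
  -- the tail
  have htail : ∑' n : ℕ, f (n + R)
      = ((R:ℝ)^2/(1-p) + 2*(R:ℝ)*(p/(1-p)^2) + p*(1+p)/(1-p)^3) * (q^R * (1-p)) := by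
    rw [tsum_congr hshift, tsum_mul_right, tsum_shift_sq hp0' hp1 (R:ℝ)]
  -- the head: finite sum of k^2 q^k
  have hgS : Summable (fun k : ℕ => (k:ℝ)^2 * q^k) :=
    summable_pow_mul_geometric_of_norm_lt_one 2
      (by rw [Real.norm_eq_abs, abs_of_nonneg hq0']; exact hq1)
  have hgsplit := Summable.sum_add_tsum_nat_add R hgS
  have hgtail : ∑' n : ℕ, ((n + R : ℕ):ℝ)^2 * q^(n + R)
      = (((R:ℝ)^2/(1-q) + 2*(R:ℝ)*(q/(1-q)^2) + q*(1+q)/(1-q)^3)) * q^R := by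
    have heq : ∀ n : ℕ, ((n + R : ℕ):ℝ)^2 * q^(n + R)
        = (((n:ℝ) + (R:ℝ))^2 * q^n) * q^R := by
      intro n; rw [pow_add]; push_cast; ring
    rw [tsum_congr heq, tsum_mul_right, tsum_shift_sq hq0' hq1 (R:ℝ)]
  have hhead : ∑ k ∈ Finset.range R, (k:ℝ)^2 * q^k
      = q*(1+q)/(1-q)^3
        - (((R:ℝ)^2/(1-q) + 2*(R:ℝ)*(q/(1-q)^2) + q*(1+q)/(1-q)^3)) * q^R := by
    rw [hgtail, tsum_sq_geometric hq0' hq1] at hgsplit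
    linarith [hgsplit]
  have hhead' : ∑ k ∈ Finset.range R, f k
      = (∑ k ∈ Finset.range R, (k:ℝ)^2 * q^k) * (1-q) := by
    rw [Finset.sum_mul]
    refine Finset.sum_congr rfl fun k hk => ?_
    have : k < R := Finset.mem_range.mp hk
    simp only [hfdef, this, if_true]; ring
  rw [hsplit, htail, hhead', hhead]
  -- now pure algebra
  have hq1' : (1:ℝ) - q ≠ 0 := by nlinarith
  have hqR : q^R ≠ 0 := pow_ne_zero _ (ne_of_gt hq0)
  have h1p : 1 - p = q^R * (1-q) / (1 - 2*q + q^R) := by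
    rw [hpdef]
    field_simp
    rw [pow_succ]; ring
  have e2 : q^(R+2) = q^R*(q*q) := by rw [pow_add]; ring
  have e1 : q^(R+1) = q^R*q := pow_succ q R
  rw [h1p, hpdef, e2, e1]
  generalize q^R = Q at hden hqR ⊢
  field_simp
  have hden2 : 1 - q*2 + Q ≠ 0 := by rwa [mul_comm] at hden
  field_simp
  ring
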